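/- Let κ : S → PMF S be any kernel such that (i) for every s ∈ W, support(κ s) ⊆ ⋃ {support(P s a) : a ∈ A s and Q*(s,a) = 0}, and (ii) for every s ∉ W, κ s = P s a for some a ∈ A s maximizing Q*(s,·) over A s; let μ^κ_s be the path measure of the Markov chain with transition function κ started at s. Then for every s ∈ S: μ^κ_s(Safe) = μ^κ_s({ω : ∃ t, ω t ∈ W}). -/

import Mathlib

open MeasureTheory Set
open scoped ENNReal Classical

variable {S : Type*}

def IsPathMeasure [MeasurableSpace S] (P : S → PMF S) (μ : S → Measure (ℕ → S)) : Prop :=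
  (∀ s, IsProbabilityMeasure (μ s)) ∧
    ∀ (s : S) (n : ℕ) (x : ℕ → S),
      μ s {ω | ∀ i ≤ n, ω i = x i} =
        (if x 0 = s then 1 else 0) * ∏ i ∈ Finset.range n, (P (x i)) (x (i + 1))

noncomputable def Rw (Acc : Set S) (γacc rn : ℝ) (s : S) : ℝ :=
  if s ∈ Acc then (1 - γacc) * rn else 0

noncomputable def Γw (Acc : Set S) (γacc γ : ℝ) (s : S) : ℝ :=
  if s ∈ Acc then γacc else γ

noncomputable def Ret (Acc : Set S) (γacc γ rn : ℝ) (ω : ℕ → S) : ℝ :=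
  ∑' t : ℕ, Rw Acc γacc rn (ω (t + 1)) * ∏ k ∈ Finset.range t, Γw Acc γacc γ (ω (k + 1))

noncomputable def Val [MeasurableSpace S] (Acc : Set S) (γacc γ rn : ℝ)
    (μ : S → Measure (ℕ → S)) (s : S) : ℝ :=
  ∫ ω, Ret Acc γacc γ rn ω ∂ (μ s)

variable {A : S → Type*}

noncomputable def Valp [MeasurableSpace S] (Acc : Set S) (γacc γ rn : ℝ)
    (μ : ((s : S) → A s) → S → Measure (ℕ → S)) (π : (s : S) → A s) (s : S) : ℝ :=
  ∫ ω, Ret Acc γacc γ rn ω ∂ (μ π s)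

noncomputable def Qp [MeasurableSpace S] [Fintype S]
    (P : (s : S) → A s → PMF S) (Acc : Set S) (γacc γ rn : ℝ)
    (μ : ((s : S) → A s) → S → Measure (ℕ → S)) (π : (s : S) → A s) (s : S) (a : A s) : ℝ :=
  ∑ s' : S, (P s a s').toReal *
    (Rw Acc γacc rn s' + Γw Acc γacc γ s' * Valp Acc γacc γ rn μ π s')

noncomputable def Qstar [MeasurableSpace S] [Fintype S]
    (P : (s : S) → A s → PMF S) (Acc : Set S) (γacc γ rn : ℝ)
    (μ : ((s : S) → A s) → S → Measure (ℕ → S)) (s : S) (a : A s) : ℝ :=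
  ⨆ π : (s' : S) → A s', Qp P Acc γacc γ rn μ π s a

def WinRegion [MeasurableSpace S] (Acc : Set S)
    (μ : ((s : S) → A s) → S → Measure (ℕ → S)) : Set S :=
  {s | ∃ π : (s' : S) → A s', μ π s {ω | ∀ t, ω t ∉ Acc} = 1}

def IsOptimal [MeasurableSpace S] (Acc : Set S) (γacc γ rn : ℝ)
    (μ : ((s : S) → A s) → S → Measure (ℕ → S)) (πo : (s : S) → A s) : Prop :=
  ∀ s, Valp Acc γacc γ rn μ πo s = ⨆ π : (s' : S) → A s', Valp Acc γacc γ rn μ π s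

set_option linter.unusedSectionVars false
set_option maxHeartbeats 1000000

section Machinery

variable [Fintype S] [MeasurableSpace S] [MeasurableSingletonClass S]

/-- extension of a finite path to ℕ -/
def pathExt {n : ℕ} (y : Fin (n + 1) → S) : ℕ → S := fun i => y ⟨min i n, by omega⟩

lemma pathExt_fin {n : ℕ} (y : Fin (n + 1) → S) (i : ℕ) (h : i ≤ n) :
    pathExt y i = y ⟨i, by omega⟩ := by
  simp only [pathExt]; congr 1; exact Fin.ext (by simp [Nat.min_eq_left h])

def cylSet (n : ℕ) (y : Fin (n + 1) → S) : Set (ℕ → S) :=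
  {ω | ∀ i ≤ n, ω i = pathExt y i}

lemma mem_cylSet_iff {n : ℕ} {y : Fin (n + 1) → S} {ω : ℕ → S} :
    ω ∈ cylSet n y ↔ ∀ i : Fin (n + 1), ω i = y i := by
  constructor
  · intro h i
    have := h i (by omega)
    rwa [pathExt_fin y i (by omega), Fin.eta] at this
  · intro h i hi
    rw [pathExt_fin y i hi]
    exact h ⟨i, by omega⟩

lemma measurableSet_cylSet (n : ℕ) (y : Fin (n + 1) → S) : MeasurableSet (cylSet n y) := by
  have : cylSet n y = ⋂ (i : ℕ) (_ : i ≤ n), (fun ω : ℕ → S => ω i) ⁻¹' {pathExt y i} := by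
    ext ω; simp [cylSet]
  rw [this]
  exact MeasurableSet.iInter fun i => MeasurableSet.iInter fun _ =>
    (measurable_pi_apply i) (measurableSet_singleton _)

lemma cylSet_disjoint {n : ℕ} {y y' : Fin (n + 1) → S} (h : y ≠ y') :
    Disjoint (cylSet n y) (cylSet n y') := by
  rw [Set.disjoint_left]
  intro ω hω hω'
  exact h (funext fun i => (mem_cylSet_iff.1 hω i).symm.trans (mem_cylSet_iff.1 hω' i))

variable (q : S → PMF S)

/-- weight of a finite path -/
noncomputable def stepWeight (n : ℕ) (y : Fin (n + 1) → S) : ℝ≥0∞ :=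
  ∏ i : Fin n, q (y i.castSucc) (y i.succ)

variable {ν : S → Measure (ℕ → S)}

lemma meas_cylSet (hν : IsPathMeasure q ν) (s : S) (n : ℕ) (y : Fin (n + 1) → S) :
    ν s (cylSet n y) = (if y 0 = s then 1 else 0) * stepWeight q n y := by
  have := hν.2 s n (pathExt y)
  rw [show {ω : ℕ → S | ∀ i ≤ n, ω i = pathExt y i} = cylSet n y from rfl] at this
  rw [this, pathExt_fin y 0 (Nat.zero_le n)]
  have hprod : ∏ i ∈ Finset.range n, (q (pathExt y i)) (pathExt y (i + 1)) = stepWeight q n y := by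
    rw [Finset.prod_range, stepWeight]
    refine Finset.prod_congr rfl fun i _ => ?_
    have h1 : pathExt y i.val = y i.castSucc := by
      rw [pathExt_fin y i.val (by omega)]; rfl
    have h2 : pathExt y (i.val + 1) = y i.succ := by
      rw [pathExt_fin y (i.val + 1) (by omega)]; rfl
    rw [h1, h2]
  rw [hprod]
  by_cases h : y 0 = s <;> simp [h]

/-- finite-horizon stay probability, explicit sum over paths -/
noncomputable def TT (F : Set S) (n : ℕ) (s : S) : ℝ≥0∞ :=
  ∑ y : Fin (n + 1) → S,
    if (∀ i, y i ∈ F) then (if y 0 = s then 1 else 0) * stepWeight q n y else 0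

lemma meas_stay (hν : IsPathMeasure q ν) (F : Set S) (s : S) (n : ℕ) :
    ν s {ω | ∀ i ≤ n, ω i ∈ F} = TT q F n s := by
  classical
  have hunion : {ω : ℕ → S | ∀ i ≤ n, ω i ∈ F} =
      ⋃ y : Fin (n + 1) → S, (if (∀ i, y i ∈ F) then cylSet n y else ∅) := by
    ext ω
    simp only [Set.mem_iUnion, Set.mem_setOf_eq]
    constructor
    · intro h
      refine ⟨fun i => ω i, ?_⟩
      rw [if_pos (fun i : Fin (n+1) => h i.val i.is_le)]
      exact mem_cylSet_iff.2 fun i => rfl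
    · rintro ⟨y, hy⟩
      by_cases hF : ∀ i, y i ∈ F
      · rw [if_pos hF] at hy
        intro i hi
        rw [mem_cylSet_iff.1 hy ⟨i, by omega⟩]
        exact hF _
      · rw [if_neg hF] at hy; exact absurd hy (Set.notMem_empty ω)
  rw [hunion, measure_iUnion, tsum_fintype]
  · refine Finset.sum_congr rfl fun y _ => ?_
    by_cases hF : ∀ i, y i ∈ F
    · rw [if_pos hF, if_pos hF, meas_cylSet q hν]
    · rw [if_neg hF, if_neg hF, measure_empty]
  · intro y y' hne
    simp only [Function.onFun]
    by_cases hF : ∀ i, y i ∈ F <;> by_cases hF' : ∀ i, y' i ∈ F <;>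
      simp [hF, hF', cylSet_disjoint hne]
  · intro y
    by_cases hF : ∀ i, y i ∈ F <;> simp [hF, measurableSet_cylSet]

end Machinery

section M2
variable {S : Type*} [Fintype S] [MeasurableSpace S] [MeasurableSingletonClass S]
variable (q q' : S → PMF S)

lemma TT_zero (F : Set S) (s : S) : TT q F 0 s = if s ∈ F then 1 else 0 := by
  classical
  rw [TT]
  rw [Fintype.sum_eq_single (fun _ : Fin 1 => s)]
  · simp [stepWeight]
  · intro y hy
    have : y 0 ≠ s := by
      intro h; exact hy (funext fun i => by rw [Fin.eq_zero i, h])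
    simp [this]

lemma stepWeight_cons (n : ℕ) (s' : S) (z : Fin (n + 1) → S) :
    stepWeight q (n + 1) (Fin.cons s' z) = q s' (z 0) * stepWeight q n z := by
  simp only [stepWeight, Fin.prod_univ_succ, Fin.castSucc_zero, Fin.cons_zero,
    Fin.cons_succ, ← Fin.succ_castSucc]

lemma TT_expand (F : Set S) (n : ℕ) (s : S) :
    ∑ s' : S, q s s' * TT q F n s' =
      ∑ z : Fin (n + 1) → S, if (∀ i, z i ∈ F) then q s (z 0) * stepWeight q n z else 0 := by
  classical
  simp only [TT, Finset.mul_sum]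
  rw [Finset.sum_comm]
  refine Finset.sum_congr rfl fun z _ => ?_
  rw [Finset.sum_eq_single (z 0)]
  · by_cases h : ∀ i, z i ∈ F <;> simp [h, mul_comm]
  · intro s' _ hs'
    by_cases h : ∀ i, z i ∈ F <;> simp [h, Ne.symm hs']
  · simp

lemma TT_succ (F : Set S) (n : ℕ) (s : S) :
    TT q F (n + 1) s = (if s ∈ F then 1 else 0) * ∑ s' : S, q s s' * TT q F n s' := by
  classical
  have key : TT q F (n + 1) s =
      ∑ z : Fin (n + 1) → S,
        (if s ∈ F ∧ (∀ i, z i ∈ F) then q s (z 0) * stepWeight q n z else 0) := by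
    rw [TT, ← (Fin.consEquiv (fun _ : Fin (n + 2) => S)).sum_comp, Fintype.sum_prod_type,
      Finset.sum_comm]
    refine Finset.sum_congr rfl fun z _ => ?_
    rw [Finset.sum_eq_single s]
    · simp only [Fin.consEquiv_apply]
      have hall : (∀ i : Fin (n + 2), (Fin.cons s z : Fin (n + 2) → S) i ∈ F) ↔
          (s ∈ F ∧ ∀ i, z i ∈ F) := by
        rw [Fin.forall_fin_succ]
        simp only [Fin.cons_zero, Fin.cons_succ]
      by_cases h : s ∈ F ∧ ∀ i, z i ∈ F
      · rw [if_pos (hall.2 h), if_pos h]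
        have h0 : (Fin.cons s z : Fin (n + 2) → S) 0 = s := rfl
        rw [if_pos h0, one_mul]
        exact stepWeight_cons q n s z
      · rw [if_neg (fun hh => h (hall.1 hh)), if_neg h]
    · intro s' _ hs'
      simp only [Fin.consEquiv_apply, Fin.cons_zero]
      split
      · simp [hs']
      · rfl
    · simp
  rw [key, TT_expand]
  by_cases hs : s ∈ F
  · simp [hs]
  · simp [hs]

lemma TT_le_one (F : Set S) (n : ℕ) (s : S) : TT q F n s ≤ 1 := by
  induction n generalizing s with
  | zero => rw [TT_zero]; split <;> simp
  | succ n ih =>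
    rw [TT_succ]
    have hsum : ∑ s' : S, (q s) s' = 1 := by rw [← tsum_fintype (L := SummationFilter.unconditional _)]; exact (q s).tsum_coe
    have h1 : (if s ∈ F then (1:ℝ≥0∞) else 0) ≤ 1 := by split <;> simp
    have h2 : ∑ s' : S, (q s) s' * TT q F n s' ≤ 1 := by
      rw [← hsum]
      refine Finset.sum_le_sum fun s' _ => ?_
      calc (q s) s' * TT q F n s' ≤ (q s) s' * 1 := mul_le_mul_right (ih s') _
        _ = (q s) s' := mul_one _
    calc (if s ∈ F then (1:ℝ≥0∞) else 0) * ∑ s' : S, (q s) s' * TT q F n s' ≤ 1 * 1 :=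
        mul_le_mul' h1 h2
      _ = 1 := one_mul 1


end M2


section M3
variable {S : Type*} [Fintype S] [MeasurableSpace S] [MeasurableSingletonClass S]
variable (q q' : S → PMF S) {F : Set S}

lemma TT_comparison (h : ∀ s ∈ F, q s = q' s) (n : ℕ) (s : S) :
    TT q F n s = TT q' F n s := by
  refine Finset.sum_congr rfl fun y _ => ?_
  by_cases hF : ∀ i, y i ∈ F
  · rw [if_pos hF, if_pos hF]
    congr 1
    refine Finset.prod_congr rfl fun i _ => ?_
    rw [h _ (hF i.castSucc)]
  · rw [if_neg hF, if_neg hF]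

lemma TT_closed_one (hcl : ∀ s' ∈ F, (q s').support ⊆ F) (n : ℕ) :
    ∀ s ∈ F, TT q F n s = 1 := by
  induction n with
  | zero => intro s hs; rw [TT_zero, if_pos hs]
  | succ n ih =>
    intro s hs
    rw [TT_succ, if_pos hs, one_mul]
    have hsum : ∑ s' : S, (q s) s' = 1 := by rw [← tsum_fintype (L := SummationFilter.unconditional _)]; exact (q s).tsum_coe
    rw [← hsum]
    refine Finset.sum_congr rfl fun s' _ => ?_
    by_cases h0 : (q s) s' = 0
    · rw [h0, zero_mul]
    · rw [ih s' (hcl s hs h0), mul_one]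

end M3


section M4
variable {S : Type*} [Fintype S] [MeasurableSpace S] [MeasurableSingletonClass S]
variable (q : S → PMF S) {ν : S → Measure (ℕ → S)}

lemma measurableSet_coord (G : Set S) (t : ℕ) : MeasurableSet {ω : ℕ → S | ω t ∈ G} :=
  measurable_pi_apply t (Set.to_countable G).measurableSet

lemma meas_stay_tendsto (hν : IsPathMeasure q ν) (F : Set S) (s : S) :
    Filter.Tendsto (fun n => TT q F n s) Filter.atTop
      (nhds (ν s {ω | ∀ t, ω t ∈ F})) := by
  have hprob := hν.1 s
  have hE : ∀ n : ℕ, MeasurableSet {ω : ℕ → S | ∀ i ≤ n, ω i ∈ F} := by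
    intro n
    have : {ω : ℕ → S | ∀ i ≤ n, ω i ∈ F} = ⋂ (i : ℕ) (_ : i ≤ n), {ω : ℕ → S | ω i ∈ F} := by
      ext ω; simp
    rw [this]
    exact MeasurableSet.iInter fun i => MeasurableSet.iInter fun _ => measurableSet_coord _ _
  have hanti : Antitone (fun n => {ω : ℕ → S | ∀ i ≤ n, ω i ∈ F}) := by
    intro m n hmn ω hω i hi
    exact hω i (le_trans hi hmn)
  have hiInter : (⋂ n, {ω : ℕ → S | ∀ i ≤ n, ω i ∈ F}) = {ω : ℕ → S | ∀ t, ω t ∈ F} := by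
    ext ω
    simp only [Set.mem_iInter, Set.mem_setOf_eq]
    exact ⟨fun h t => h t t le_rfl, fun h n i _ => h i⟩
  have := MeasureTheory.tendsto_measure_iInter_atTop (μ := ν s)
    (fun n => (hE n).nullMeasurableSet) hanti ⟨0, measure_ne_top _ _⟩
  rw [hiInter] at this
  have heq : (fun n => TT q F n s) = (ν s) ∘ (fun n => {ω : ℕ → S | ∀ i ≤ n, ω i ∈ F}) := by
    funext n
    exact (meas_stay q hν F s n).symm
  rw [heq]
  exact this

lemma meas_stay_inf (hν : IsPathMeasure q ν) {F : Set S}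
    (hcl : ∀ s' ∈ F, (q s').support ⊆ F) {s : S} (hs : s ∈ F) :
    ν s {ω | ∀ t, ω t ∈ F} = 1 := by
  have h1 := meas_stay_tendsto q hν F s
  have h2 : Filter.Tendsto (fun n => TT q F n s) Filter.atTop (nhds 1) := by
    have : (fun n => TT q F n s) = fun _ => (1 : ℝ≥0∞) := by
      funext n; exact TT_closed_one q hcl n s hs
    rw [this]; exact tendsto_const_nhds
  exact tendsto_nhds_unique h1 h2

lemma leak_null (hν : IsPathMeasure q ν) {F : Set S}
    (hcl : ∀ s' ∈ F, (q s').support ⊆ F) (s : S) (k : ℕ) :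
    ν s {ω | ω k ∈ F ∧ ω (k + 1) ∉ F} = 0 := by
  classical
  have hsub : {ω : ℕ → S | ω k ∈ F ∧ ω (k + 1) ∉ F} ⊆
      ⋃ y : Fin (k + 2) → S,
        (if y ⟨k, by omega⟩ ∈ F ∧ y ⟨k + 1, by omega⟩ ∉ F then cylSet (k + 1) y else ∅) := by
    intro ω hω
    rw [Set.mem_iUnion]
    refine ⟨fun i => ω i, ?_⟩
    have hc : ((fun i : Fin (k + 2) => ω ↑i) ⟨k, by omega⟩ ∈ F ∧
        (fun i : Fin (k + 2) => ω ↑i) ⟨k + 1, by omega⟩ ∉ F) := hω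
    rw [if_pos hc]
    exact mem_cylSet_iff.2 fun i => rfl
  have hbound := le_trans (measure_mono hsub) (measure_iUnion_le
    (μ := ν s) (fun y : Fin (k + 2) → S =>
      (if y ⟨k, by omega⟩ ∈ F ∧ y ⟨k + 1, by omega⟩ ∉ F then cylSet (k + 1) y else ∅)))
  have : ∀ y : Fin (k + 2) → S,
      ν s (if y ⟨k, by omega⟩ ∈ F ∧ y ⟨k + 1, by omega⟩ ∉ F then cylSet (k + 1) y else ∅)
        = 0 := by
    intro y
    by_cases h : y ⟨k, by omega⟩ ∈ F ∧ y ⟨k + 1, by omega⟩ ∉ F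
    · rw [if_pos h, meas_cylSet q hν]
      have hzero : stepWeight q (k + 1) y = 0 := by
        refine Finset.prod_eq_zero (Finset.mem_univ (⟨k, by omega⟩ : Fin (k + 1))) ?_
        rw [(q _).apply_eq_zero_iff]
        intro hmem
        exact h.2 (hcl _ h.1 hmem)
      rw [hzero, mul_zero]
    · rw [if_neg h, measure_empty]
  have hz : (∑' y : Fin (k + 2) → S,
      ν s (if y ⟨k, by omega⟩ ∈ F ∧ y ⟨k + 1, by omega⟩ ∉ F then cylSet (k + 1) y else ∅))
      = 0 := by rw [tsum_congr this]; simp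
  exact le_antisymm (hz ▸ hbound) (zero_le)

lemma start_null (hν : IsPathMeasure q ν) (s : S) :
    ν s {ω | ω 0 ≠ s} = 0 := by
  classical
  have hsub : {ω : ℕ → S | ω 0 ≠ s} ⊆
      ⋃ y : Fin 1 → S, (if y 0 ≠ s then cylSet 0 y else ∅) := by
    intro ω hω
    rw [Set.mem_iUnion]
    refine ⟨fun i => ω i, ?_⟩
    have hc : ((fun i : Fin 1 => ω ↑i) 0 ≠ s) := hω
    rw [if_pos hc]
    exact mem_cylSet_iff.2 fun i => by rw [Fin.eq_zero i]
  have hbound := le_trans (measure_mono hsub) (measure_iUnion_le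
    (μ := ν s) (fun y : Fin 1 → S => (if y 0 ≠ s then cylSet 0 y else ∅)))
  have h0 : ∀ y : Fin 1 → S, ν s (if y 0 ≠ s then cylSet 0 y else ∅) = 0 := by
    intro y
    by_cases h : y 0 ≠ s
    · rw [if_pos h, meas_cylSet q hν, if_neg h, zero_mul]
    · rw [if_neg h, measure_empty]
  have hz : (∑' y : Fin 1 → S, ν s (if y 0 ≠ s then cylSet 0 y else ∅)) = 0 := by
    rw [tsum_congr h0]; simp
  exact le_antisymm (hz ▸ hbound) (zero_le)

lemma start_ae (hν : IsPathMeasure q ν) (s : S) :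
    ∀ᵐ ω ∂ (ν s), ω 0 = s := by
  rw [MeasureTheory.ae_iff]
  exact start_null q hν s

end M4

section Value
variable {S : Type*} (Acc : Set S) (rn γ γacc : ℝ)
variable (hrn : rn < 0) (hγ : 0 < γ ∧ γ < 1) (hγacc : 0 < γacc ∧ γacc < 1)

/-- the `t`-th term of the return -/
noncomputable def retTerm (ω : ℕ → S) (t : ℕ) : ℝ :=
  Rw Acc γacc rn (ω (t + 1)) * ∏ k ∈ Finset.range t, Γw Acc γacc γ (ω (k + 1))

lemma Ret_eq_tsum_retTerm (ω : ℕ → S) : Ret Acc γacc γ rn ω = ∑' t, retTerm Acc rn γ γacc ω t :=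
  rfl

include hrn hγacc in
lemma Rw_nonpos (s : S) : Rw Acc γacc rn s ≤ 0 := by
  rw [Rw]
  split
  · exact mul_nonpos_of_nonneg_of_nonpos (by linarith [hγacc.2]) hrn.le
  · exact le_rfl

include hγ hγacc in
lemma Γw_pos (s : S) : 0 < Γw Acc γacc γ s := by
  rw [Γw]; split
  · exact hγacc.1
  · exact hγ.1

include hγ hγacc in
lemma Γw_le (s : S) : Γw Acc γacc γ s ≤ max γ γacc := by
  rw [Γw]; split
  · exact le_max_right _ _
  · exact le_max_left _ _

include hrn hγ hγacc in
lemma retTerm_nonpos (ω : ℕ → S) (t : ℕ) : retTerm Acc rn γ γacc ω t ≤ 0 :=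
  mul_nonpos_of_nonpos_of_nonneg (Rw_nonpos Acc rn γacc hrn hγacc _)
    (Finset.prod_nonneg fun k _ => (Γw_pos Acc γ γacc hγ hγacc _).le)

include hrn hγ hγacc in
lemma retTerm_abs_le (ω : ℕ → S) (t : ℕ) :
    |retTerm Acc rn γ γacc ω t| ≤ ((1 - γacc) * (-rn)) * (max γ γacc) ^ t := by
  rw [retTerm, abs_mul]
  have h1 : |Rw Acc γacc rn (ω (t + 1))| ≤ (1 - γacc) * (-rn) := by
    rw [Rw]
    split
    · rw [abs_mul, abs_of_nonneg (by linarith [hγacc.2] : (0:ℝ) ≤ 1 - γacc),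
        abs_of_neg hrn]
    · simp only [abs_zero]
      nlinarith [hγacc.2, hrn]
  have h2 : |∏ k ∈ Finset.range t, Γw Acc γacc γ (ω (k + 1))| ≤ (max γ γacc) ^ t := by
    rw [Finset.abs_prod]
    calc ∏ k ∈ Finset.range t, |Γw Acc γacc γ (ω (k + 1))|
        ≤ ∏ k ∈ Finset.range t, max γ γacc := by
          refine Finset.prod_le_prod (fun k _ => abs_nonneg _) fun k _ => ?_
          rw [abs_of_pos (Γw_pos Acc γ γacc hγ hγacc _)]
          exact Γw_le Acc γ γacc hγ hγacc _
      _ = (max γ γacc) ^ t := by rw [Finset.prod_const, Finset.card_range]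
  exact mul_le_mul h1 h2 (abs_nonneg _) (by nlinarith [hγacc.2, hrn])

include hrn hγ hγacc in
lemma summable_retTerm (ω : ℕ → S) : Summable (retTerm Acc rn γ γacc ω) := by
  have hr : 0 ≤ max γ γacc := le_trans hγ.1.le (le_max_left _ _)
  have hr1 : max γ γacc < 1 := max_lt hγ.2 hγacc.2
  refine Summable.of_abs (Summable.of_nonneg_of_le (fun t => abs_nonneg _)
    (fun t => retTerm_abs_le Acc rn γ γacc hrn hγ hγacc ω t) ?_)
  exact (summable_geometric_of_lt_one hr hr1).mul_left _

include hrn hγ hγacc in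
lemma Ret_nonpos (ω : ℕ → S) : Ret Acc γacc γ rn ω ≤ 0 :=
  tsum_nonpos (retTerm_nonpos Acc rn γ γacc hrn hγ hγacc ω)

/-- uniform bound for the return -/
noncomputable def retBound : ℝ := ∑' t : ℕ, ((1 - γacc) * (-rn)) * (max γ γacc) ^ t

include hrn hγ hγacc in
lemma abs_Ret_le (ω : ℕ → S) : ‖Ret Acc γacc γ rn ω‖ ≤ retBound rn γ γacc := by
  have hr : 0 ≤ max γ γacc := le_trans hγ.1.le (le_max_left _ _)
  have hr1 : max γ γacc < 1 := max_lt hγ.2 hγacc.2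
  have hgeo : Summable (fun t : ℕ => ((1 - γacc) * (-rn)) * (max γ γacc) ^ t) :=
    (summable_geometric_of_lt_one hr hr1).mul_left _
  have habs : Summable (fun t => ‖retTerm Acc rn γ γacc ω t‖) := by
    refine Summable.of_nonneg_of_le (fun t => norm_nonneg _)
      (fun t => ?_) hgeo
    exact retTerm_abs_le Acc rn γ γacc hrn hγ hγacc ω t
  calc ‖Ret Acc γacc γ rn ω‖ ≤ ∑' t, ‖retTerm Acc rn γ γacc ω t‖ :=
      norm_tsum_le_tsum_norm habs
    _ ≤ retBound rn γ γacc :=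
      Summable.tsum_le_tsum (fun t => retTerm_abs_le Acc rn γ γacc hrn hγ hγacc ω t) habs hgeo

include hrn hγ hγacc in
lemma Ret_lt_zero_of_mem (ω : ℕ → S) (t : ℕ) (ht : ω (t + 1) ∈ Acc) :
    Ret Acc γacc γ rn ω < 0 := by
  have hsum := summable_retTerm Acc rn γ γacc hrn hγ hγacc ω
  have hterm : retTerm Acc rn γ γacc ω t < 0 := by
    rw [retTerm, Rw, if_pos ht]
    have h1 : (1 - γacc) * rn < 0 :=
      mul_neg_of_pos_of_neg (by linarith [hγacc.2]) hrn
    have h2 : 0 < ∏ k ∈ Finset.range t, Γw Acc γacc γ (ω (k + 1)) :=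
      Finset.prod_pos fun k _ => Γw_pos Acc γ γacc hγ hγacc _
    exact mul_neg_of_neg_of_pos h1 h2
  have hle : Ret Acc γacc γ rn ω ≤ retTerm Acc rn γ γacc ω t := by
    rw [Ret_eq_tsum_retTerm]
    have : (∑' u, (if u = t then retTerm Acc rn γ γacc ω t else 0)) =
        retTerm Acc rn γ γacc ω t := tsum_ite_eq t _
    rw [← this]
    refine Summable.tsum_le_tsum (fun u => ?_) hsum ((hasSum_ite_eq t _).summable)
    by_cases hu : u = t
    · subst hu; simp
    · rw [if_neg hu]
      exact retTerm_nonpos Acc rn γ γacc hrn hγ hγacc ω u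
  exact lt_of_le_of_lt hle hterm

include hrn hγ hγacc in
lemma Ret_zero_safe (ω : ℕ → S) (h : Ret Acc γacc γ rn ω = 0) (t : ℕ) :
    ω (t + 1) ∉ Acc := fun ht =>
  absurd h (ne_of_lt (Ret_lt_zero_of_mem Acc rn γ γacc hrn hγ hγacc ω t ht))

variable [MeasurableSpace S] [MeasurableSingletonClass S] [Fintype S]

include hrn hγ hγacc in
lemma measurable_Ret : Measurable (Ret Acc γacc γ rn : (ℕ → S) → ℝ) := by
  have hterm : ∀ t : ℕ, Measurable (fun ω : ℕ → S => retTerm Acc rn γ γacc ω t) := by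
    intro t
    refine Measurable.mul ?_ ?_
    · exact (Measurable.of_discrete (f := Rw Acc γacc rn)).comp (measurable_pi_apply (t + 1))
    · refine Finset.measurable_prod _ fun k _ => ?_
      exact (Measurable.of_discrete (f := Γw Acc γacc γ)).comp (measurable_pi_apply (k + 1))
  refine measurable_of_tendsto_metrizable
    (f := fun N ω => ∑ t ∈ Finset.range N, retTerm Acc rn γ γacc ω t)
    (fun N => Finset.measurable_sum _ fun t _ => hterm t) ?_
  rw [tendsto_pi_nhds]
  intro ω
  exact (summable_retTerm Acc rn γ γacc hrn hγ hγacc ω).hasSum.tendsto_sum_nat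

include hrn hγ hγacc in
lemma integrable_Ret (ν : Measure (ℕ → S)) [IsProbabilityMeasure ν] :
    Integrable (Ret Acc γacc γ rn) ν := by
  refine Integrable.mono' (integrable_const (retBound rn γ γacc))
    (measurable_Ret Acc rn γ γacc hrn hγ hγacc).aestronglyMeasurable ?_
  exact Filter.Eventually.of_forall fun ω => abs_Ret_le Acc rn γ γacc hrn hγ hγacc ω

include hrn hγ hγacc in
lemma safety_of_val_zero (q : S → PMF S) {ν : S → Measure (ℕ → S)}
    (hν : IsPathMeasure q ν) (habs' : ∀ s ∈ Acc, (q s).support ⊆ Acc) (s : S)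
    (hval : ∫ ω, Ret Acc γacc γ rn ω ∂(ν s) = 0) :
    ν s {ω | ∀ t, ω t ∉ Acc} = 1 := by
  have hprob := hν.1 s
  have hint := integrable_Ret Acc rn γ γacc hrn hγ hγacc (ν s)
  have hae : ∀ᵐ ω ∂(ν s), Ret Acc γacc γ rn ω = 0 := by
    have hnonneg : 0 ≤ᵐ[ν s] fun ω => -Ret Acc γacc γ rn ω :=
      Filter.Eventually.of_forall fun ω => neg_nonneg.2 (Ret_nonpos Acc rn γ γacc hrn hγ hγacc ω)
    have hzero : ∫ ω, -Ret Acc γacc γ rn ω ∂(ν s) = 0 := by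
      rw [integral_neg, hval, neg_zero]
    have := (MeasureTheory.integral_eq_zero_iff_of_nonneg_ae hnonneg hint.neg).1 hzero
    filter_upwards [this] with ω hω
    have : -Ret Acc γacc γ rn ω = 0 := hω
    linarith
  have hstart := (start_ae q hν s)
  by_cases hs : s ∈ Acc
  · -- contradiction: value must be negative
    have hleak : ν s {ω | ω 0 ∈ Acc ∧ ω 1 ∉ Acc} = 0 :=
      leak_null q hν (fun s' hs' => habs' s' hs') s 0
    have h1 : ∀ᵐ ω ∂(ν s), ¬(ω 0 ∈ Acc ∧ ω 1 ∉ Acc) := by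
      rw [MeasureTheory.ae_iff]
      simpa using hleak
    have : ∀ᵐ ω ∂(ν s), False := by
      filter_upwards [hae, hstart, h1] with ω h0 hω1 hω2
      have hacc1 : ω 1 ∈ Acc := by
        by_contra hn
        exact hω2 ⟨hω1 ▸ hs, hn⟩
      exact absurd h0 (ne_of_lt (Ret_lt_zero_of_mem Acc rn γ γacc hrn hγ hγacc ω 0 hacc1))
    rw [MeasureTheory.ae_iff] at this
    simp only [not_false_iff] at this
    have huniv : ν s Set.univ = 0 := by simpa using this
    rw [measure_univ] at huniv
    exact absurd huniv one_ne_zero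
  · have hnull : ν s {ω | ¬ ∀ t, ω t ∉ Acc} = 0 := by
      have hsub : {ω : ℕ → S | ¬ ∀ t, ω t ∉ Acc} ⊆
          {ω | Ret Acc γacc γ rn ω ≠ 0} ∪ {ω | ω 0 ≠ s} := by
        intro ω hω
        by_contra hcon
        rw [Set.mem_union] at hcon
        push_neg at hcon
        obtain ⟨hr, h0⟩ := hcon
        simp only [Set.mem_setOf_eq, not_not] at hr h0
        apply hω
        intro t
        cases t with
        | zero => rw [h0]; exact hs
        | succ t => exact Ret_zero_safe Acc rn γ γacc hrn hγ hγacc ω hr t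
      refine measure_mono_null hsub (measure_union_null ?_ ?_)
      · rw [MeasureTheory.ae_iff] at hae
        simpa using hae
      · exact start_null q hν s
    have h1 : (1:ℝ≥0∞) = ν s Set.univ := (measure_univ).symm
    have hsplit : ν s Set.univ ≤ ν s {ω | ∀ t, ω t ∉ Acc} + ν s {ω | ¬ ∀ t, ω t ∉ Acc} := by
      refine le_trans (measure_mono ?_) (measure_union_le _ _)
      intro ω _
      by_cases h : ∀ t, ω t ∉ Acc
      · exact Or.inl h
      · exact Or.inr h
    rw [hnull, add_zero] at hsplit
    exact le_antisymm (prob_le_one) (h1 ▸ hsplit)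

end Value


section ValueQ
variable {S : Type*} [Fintype S] [Nonempty S] [MeasurableSpace S] [MeasurableSingletonClass S]
variable {A : S → Type*} [∀ s, Fintype (A s)] [∀ s, Nonempty (A s)]
variable (P : (s : S) → A s → PMF S) (Acc : Set S) (rn γ γacc : ℝ)
variable (μ : ((s : S) → A s) → S → Measure (ℕ → S))
variable (hrn : rn < 0) (hγ : 0 < γ ∧ γ < 1) (hγacc : 0 < γacc ∧ γacc < 1)
variable (hμ : ∀ π : (s : S) → A s, IsPathMeasure (fun s => P s (π s)) (μ π))

include hrn hγ hγacc in
lemma Valp_nonpos (π : (s : S) → A s) (s : S) : Valp Acc γacc γ rn μ π s ≤ 0 :=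
  integral_nonpos fun ω => Ret_nonpos Acc rn γ γacc hrn hγ hγacc ω

include hrn hγ hγacc hμ in
lemma support_subset_of_Qstar_zero
    (habs : ∀ s ∈ Acc, ∀ a : A s, (P s a).support ⊆ Acc)
    (s : S) (a : A s) (hQ : Qstar P Acc γacc γ rn μ s a = 0) :
    ∀ s' ∈ (P s a).support, s' ∈ WinRegion Acc μ ∧ s' ∉ Acc := by
  classical
  obtain ⟨π₀, hπ₀⟩ := Finite.exists_max (fun π : (s' : S) → A s' => Qp P Acc γacc γ rn μ π s a)
  have hQeq : Qstar P Acc γacc γ rn μ s a = Qp P Acc γacc γ rn μ π₀ s a := by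
    rw [Qstar]
    refine le_antisymm (ciSup_le hπ₀) ?_
    exact le_ciSup (f := fun π : (s' : S) → A s' => Qp P Acc γacc γ rn μ π s a)
      (Set.Finite.bddAbove (Set.finite_range _)) π₀
  have hq0 : Qp P Acc γacc γ rn μ π₀ s a = 0 := by rw [← hQeq, hQ]
  have hterm_nonpos : ∀ s' : S, (P s a s').toReal *
      (Rw Acc γacc rn s' + Γw Acc γacc γ s' * Valp Acc γacc γ rn μ π₀ s') ≤ 0 := by
    intro s'
    refine mul_nonpos_of_nonneg_of_nonpos ENNReal.toReal_nonneg ?_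
    have h1 := Rw_nonpos Acc rn γacc hrn hγacc s'
    have h2 : Γw Acc γacc γ s' * Valp Acc γacc γ rn μ π₀ s' ≤ 0 :=
      mul_nonpos_of_nonneg_of_nonpos (Γw_pos Acc γ γacc hγ hγacc s').le
        (Valp_nonpos Acc rn γ γacc μ hrn hγ hγacc π₀ s')
    linarith
  have hall := (Finset.sum_eq_zero_iff_of_nonpos
    (fun s' _ => hterm_nonpos s')).1 hq0
  intro s' hs'
  have hpos : 0 < (P s a s').toReal :=
    ENNReal.toReal_pos ((P s a).mem_support_iff s' |>.1 hs') (PMF.apply_ne_top _ _)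
  have hterm0 : Rw Acc γacc rn s' + Γw Acc γacc γ s' * Valp Acc γacc γ rn μ π₀ s' = 0 := by
    have := hall s' (Finset.mem_univ s')
    rcases mul_eq_zero.1 this with h | h
    · exact absurd h (ne_of_gt hpos)
    · exact h
  have hs'Acc : s' ∉ Acc := by
    intro hmem
    have h1 : Rw Acc γacc rn s' < 0 := by
      rw [Rw, if_pos hmem]
      exact mul_neg_of_pos_of_neg (by linarith [hγacc.2]) hrn
    have h2 : Γw Acc γacc γ s' * Valp Acc γacc γ rn μ π₀ s' ≤ 0 :=
      mul_nonpos_of_nonneg_of_nonpos (Γw_pos Acc γ γacc hγ hγacc s').le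
        (Valp_nonpos Acc rn γ γacc μ hrn hγ hγacc π₀ s')
    linarith
  refine ⟨?_, hs'Acc⟩
  have hVal0 : Valp Acc γacc γ rn μ π₀ s' = 0 := by
    rw [Rw, if_neg hs'Acc, Γw, if_neg hs'Acc] at hterm0
    have hγne : γ ≠ 0 := ne_of_gt hγ.1
    have hmul : γ * Valp Acc γacc γ rn μ π₀ s' = 0 := by linarith
    exact (mul_eq_zero.1 hmul).resolve_left hγne
  refine ⟨π₀, ?_⟩
  exact safety_of_val_zero Acc rn γ γacc hrn hγ hγacc (fun t => P t (π₀ t)) (hμ π₀)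
    (fun u hu => habs u hu (π₀ u)) s' hVal0

end ValueQ



lemma crossing_exists {S : Type*} {G : Set S} (ω : ℕ → S) {t u : ℕ}
    (h1 : ω t ∈ G) (h2 : ω u ∉ G) (htu : t ≤ u) :
    ∃ k, ω k ∈ G ∧ ω (k + 1) ∉ G := by
  by_contra hno
  push_neg at hno
  have : ∀ j, t ≤ j → ω j ∈ G := by
    intro j hj
    induction j, hj using Nat.le_induction with
    | base => exact h1
    | succ n hn ih => exact hno n ih
  exact h2 (this u htu)

/-- for the kernel induced by the permissive supervisor (enabling exactly
the actions of optimal value 0 inside the winning region and an optimal action outside),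
the probability of safety equals the probability of reaching the winning region. -/
theorem supervisor_kernel_safety_eq_reach_winning_region
    [Fintype S] [Nonempty S] [MeasurableSpace S] [MeasurableSingletonClass S]
    [∀ s, Fintype (A s)] [∀ s, Nonempty (A s)]
    (P : (s : S) → A s → PMF S) (Acc : Set S)
    (habs : ∀ s ∈ Acc, ∀ a : A s, (P s a).support ⊆ Acc)
    (μ : ((s : S) → A s) → S → Measure (ℕ → S))
    (hμ : ∀ π : (s : S) → A s, IsPathMeasure (fun s => P s (π s)) (μ π))
    (rn γ γacc : ℝ) (hrn : rn < 0) (hγ : 0 < γ ∧ γ < 1) (hγacc : 0 < γacc ∧ γacc < 1)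
    (κ : S → PMF S) (μκ : S → Measure (ℕ → S)) (hμκ : IsPathMeasure κ μκ)
    (hi : ∀ s ∈ WinRegion Acc μ, (κ s).support ⊆
        ⋃ a ∈ {a : A s | Qstar P Acc γacc γ rn μ s a = 0}, (P s a).support)
    (hii : ∀ s ∉ WinRegion Acc μ, ∃ a : A s,
        (∀ a' : A s, Qstar P Acc γacc γ rn μ s a' ≤ Qstar P Acc γacc γ rn μ s a) ∧
          κ s = P s a) :
    ∀ s : S, μκ s {ω | ∀ t, ω t ∉ Acc} =
      μκ s {ω | ∃ t, ω t ∈ WinRegion Acc μ} := by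
  classical
  intro s
  set W := WinRegion Acc μ with hW
  -- W and Acc are disjoint
  have hWAcc : ∀ u ∈ W, u ∉ Acc := by
    intro u hu huAcc
    obtain ⟨π, hπ⟩ := hu
    have hsub : {ω : ℕ → S | ∀ t, ω t ∉ Acc} ⊆ {ω | ω 0 ≠ u} := by
      intro ω hω he
      exact (hω 0) (he ▸ huAcc)
    have h0 := measure_mono_null hsub (start_null (fun v => P v (π v)) (hμ π) u)
    rw [hπ] at h0
    exact one_ne_zero h0
  -- κ maps W into W \ Acc
  have hker_W : ∀ u ∈ W, ∀ v ∈ (κ u).support, v ∈ W ∧ v ∉ Acc := by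
    intro u hu v hv
    have := hi u hu hv
    simp only [Set.mem_iUnion, Set.mem_setOf_eq] at this
    obtain ⟨a, ha, hva⟩ := this
    exact support_subset_of_Qstar_zero P Acc rn γ γacc μ hrn hγ hγacc hμ habs u a ha v hva
  have hclW : ∀ u ∈ W, (κ u).support ⊆ W := fun u hu v hv => (hker_W u hu v hv).1
  have hclAcc : ∀ u ∈ Acc, (κ u).support ⊆ Acc := by
    intro u hu
    have hunotW : u ∉ W := fun h => hWAcc u h hu
    obtain ⟨a, _, hκ⟩ := hii u hunotW
    rw [hκ]
    exact habs u hu a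
  set Safe : Set (ℕ → S) := {ω | ∀ t, ω t ∉ Acc} with hSafe
  set Reach : Set (ℕ → S) := {ω | ∃ t, ω t ∈ W} with hReach
  -- Direction A : Reach \ Safe is null
  have hAnull : μκ s (Reach \ Safe) = 0 := by
    have hsub : Reach \ Safe ⊆
        ⋃ k : ℕ, ({ω : ℕ → S | ω k ∈ W ∧ ω (k + 1) ∉ W} ∪
          {ω : ℕ → S | ω k ∈ Acc ∧ ω (k + 1) ∉ Acc}) := by
      rintro ω ⟨hωR, hωS⟩
      obtain ⟨t, ht⟩ := hωR
      have : ∃ u, ω u ∈ Acc := by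
        by_contra h
        push_neg at h
        exact hωS h
      obtain ⟨u, hu⟩ := this
      rw [Set.mem_iUnion]
      rcases le_or_gt t u with htu | hut
      · obtain ⟨k, hk1, hk2⟩ := crossing_exists ω ht (fun h => hWAcc _ h hu) htu
        exact ⟨k, Or.inl ⟨hk1, hk2⟩⟩
      · obtain ⟨k, hk1, hk2⟩ := crossing_exists ω hu (hWAcc _ ht) hut.le
        exact ⟨k, Or.inr ⟨hk1, hk2⟩⟩
    refine measure_mono_null hsub (measure_iUnion_null fun k => measure_union_null ?_ ?_)
    · exact leak_null κ hμκ hclW s k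
    · exact leak_null κ hμκ hclAcc s k
  -- Direction B : Safe \ Reach is null
  set F : Set S := {u | u ∉ W ∧ u ∉ Acc} with hF
  have hSR : Safe \ Reach = {ω | ∀ t, ω t ∈ F} := by
    ext ω
    simp only [Set.mem_diff, hSafe, hReach, hF, Set.mem_setOf_eq, not_exists]
    constructor
    · rintro ⟨h1, h2⟩ t
      exact ⟨h2 t, h1 t⟩
    · intro h
      exact ⟨fun t => (h t).2, fun t => (h t).1⟩
  set g : S → ℝ≥0∞ := fun u => μκ u {ω | ∀ t, ω t ∈ F} with hg
  have hg_le_one : ∀ u, g u ≤ 1 := by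
    intro u
    haveI := hμκ.1 u
    exact prob_le_one
  have hg_ne_top : ∀ u, g u ≠ ∞ := fun u => (lt_of_le_of_lt (hg_le_one u) ENNReal.one_lt_top).ne
  have hg_zero : ∀ u, u ∉ F → g u = 0 := by
    intro u hu
    refine measure_mono_null ?_ (start_null κ hμκ u)
    intro ω hω he
    exact hu (he ▸ hω 0)
  have hrec : ∀ u, g u = (if u ∈ F then 1 else 0) * ∑ u' : S, κ u u' * g u' := by
    intro u
    have h1 : ∀ v, Filter.Tendsto (fun n => TT κ F n v) Filter.atTop (nhds (g v)) :=
      fun v => meas_stay_tendsto κ hμκ F v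
    have h2 : Filter.Tendsto (fun n => TT κ F (n + 1) u) Filter.atTop (nhds (g u)) := by
      have := (h1 u).comp (Filter.tendsto_add_atTop_nat 1)
      exact this
    have h3 : Filter.Tendsto (fun n => (if u ∈ F then (1:ℝ≥0∞) else 0) *
        ∑ u' : S, κ u u' * TT κ F n u') Filter.atTop
        (nhds ((if u ∈ F then 1 else 0) * ∑ u' : S, κ u u' * g u')) := by
      refine ENNReal.Tendsto.const_mul ?_ (Or.inr (by split <;> simp))
      refine tendsto_finset_sum _ fun u' _ => ?_
      exact ENNReal.Tendsto.const_mul (h1 u') (Or.inr (PMF.apply_ne_top _ _))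
    have heq : (fun n => TT κ F (n + 1) u) = fun n => (if u ∈ F then (1:ℝ≥0∞) else 0) *
        ∑ u' : S, κ u u' * TT κ F n u' := by
      funext n
      have h := TT_succ κ F n u
      convert h using 2
      by_cases hc : u ∈ F <;> simp [hc]
    rw [heq] at h2
    exact tendsto_nhds_unique h2 h3
  set gr : S → ℝ := fun u => (g u).toReal with hgr
  have hgr_nonneg : ∀ u, 0 ≤ gr u := fun u => ENNReal.toReal_nonneg
  have hrecr : ∀ u ∈ F, gr u = ∑ u' : S, (κ u u').toReal * gr u' := by
    intro u hu
    have h := hrec u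
    rw [if_pos hu, one_mul] at h
    rw [hgr]
    simp only
    rw [h, ENNReal.toReal_sum (fun u' _ => ?_)]
    · exact Finset.sum_congr rfl fun u' _ => ENNReal.toReal_mul
    · exact ENNReal.mul_ne_top (PMF.apply_ne_top _ _) (hg_ne_top u')
  obtain ⟨u₀, -, hu₀⟩ := Finset.exists_mem_eq_sup' (Finset.univ_nonempty (α := S)) gr
  set m : ℝ := Finset.univ.sup' Finset.univ_nonempty gr with hm
  have hm_ge : ∀ u, gr u ≤ m := fun u => Finset.le_sup' gr (Finset.mem_univ u)
  have hg0 : ∀ u, g u = 0 := by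
    by_cases hmle : m ≤ 0
    · intro u
      have h0 : gr u = 0 := le_antisymm (le_trans (hm_ge u) hmle) (hgr_nonneg u)
      exact ((ENNReal.toReal_eq_zero_iff _).1 h0).resolve_right (hg_ne_top u)
    · exfalso
      push_neg at hmle
      set M : Set S := {u | gr u = m} with hM
      have hu₀M : u₀ ∈ M := hu₀.symm
      have hMF : M ⊆ F := by
        intro u hu
        by_contra huF
        have := hg_zero u huF
        have : gr u = 0 := by rw [hgr]; simp only; rw [this]; exact ENNReal.toReal_zero
        rw [hM] at hu
        simp only [Set.mem_setOf_eq] at hu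
        linarith [hu ▸ this]
      have hsum1 : ∀ u : S, ∑ u' : S, (κ u u').toReal = 1 := by
        intro u
        have h1 : ∑ u' : S, κ u u' = 1 := by rw [← tsum_fintype (L := SummationFilter.unconditional _)]; exact (κ u).tsum_coe
        rw [← ENNReal.toReal_sum (fun u' _ => PMF.apply_ne_top _ _), h1, ENNReal.toReal_one]
      have hMcl : ∀ u ∈ M, (κ u).support ⊆ M := by
        intro u hu v hv
        by_contra hvM
        have hgru : gr u = m := hu
        have hgrv : gr v < m := lt_of_le_of_ne (hm_ge v) hvM
        have hkv : 0 < (κ u v).toReal :=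
          ENNReal.toReal_pos ((κ u).mem_support_iff v |>.1 hv) (PMF.apply_ne_top _ _)
        have hlt : ∑ u' : S, (κ u u').toReal * gr u' < m := by
          have hsplit := (Finset.add_sum_erase Finset.univ
            (fun u' => (κ u u').toReal * gr u') (Finset.mem_univ v)).symm
          have hsplit2 := (Finset.add_sum_erase Finset.univ
            (fun u' => (κ u u').toReal * m) (Finset.mem_univ v)).symm
          calc ∑ u' : S, (κ u u').toReal * gr u'
              = (κ u v).toReal * gr v +
                ∑ u' ∈ Finset.univ.erase v, (κ u u').toReal * gr u' := hsplit
            _ < (κ u v).toReal * m +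
                ∑ u' ∈ Finset.univ.erase v, (κ u u').toReal * m := by
                refine add_lt_add_of_lt_of_le (mul_lt_mul_of_pos_left hgrv hkv) ?_
                exact Finset.sum_le_sum fun u' _ =>
                  mul_le_mul_of_nonneg_left (hm_ge u') ENNReal.toReal_nonneg
            _ = ∑ u' : S, (κ u u').toReal * m := hsplit2.symm
            _ = (∑ u' : S, (κ u u').toReal) * m := by rw [Finset.sum_mul]
            _ = m := by rw [hsum1 u, one_mul]
        rw [← hrecr u (hMF hu)] at hlt
        rw [hgru] at hlt
        exact lt_irrefl m hlt
      -- stay-in-M has probability one under κ from u₀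
      have hstayM : μκ u₀ {ω | ∀ t, ω t ∈ M} = 1 :=
        meas_stay_inf κ hμκ hMcl hu₀M
      -- build a policy agreeing with κ outside W
      set π : (u : S) → A u := fun u =>
        if h : u ∈ W then Classical.arbitrary (A u) else (hii u h).choose with hπdef
      have hπκ : ∀ u ∈ M, κ u = P u (π u) := by
        intro u hu
        have hWu : u ∉ W := (hMF hu).1
        rw [hπdef]
        simp only [dif_neg hWu]
        exact (hii u hWu).choose_spec.2
      have hTTeq : ∀ n u', TT κ M n u' = TT (fun v => P v (π v)) M n u' :=
        fun n u' => TT_comparison κ (fun v => P v (π v)) hπκ n u'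
      have hstayMπ : μ π u₀ {ω | ∀ t, ω t ∈ M} = 1 := by
        have t1 := meas_stay_tendsto κ hμκ M u₀
        have t2 := meas_stay_tendsto (fun v => P v (π v)) (hμ π) M u₀
        have : (fun n => TT κ M n u₀) = fun n => TT (fun v => P v (π v)) M n u₀ := by
          funext n; exact hTTeq n u₀
        rw [this] at t1
        have := tendsto_nhds_unique t1 t2
        rw [← this, hstayM]
      have hu₀W : u₀ ∈ W := by
        refine ⟨π, ?_⟩
        haveI := (hμ π).1 u₀
        refine le_antisymm prob_le_one ?_
        rw [← hstayMπ]
        refine measure_mono ?_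
        intro ω hω t
        exact (hMF (hω t)).2
      exact (hMF hu₀M).1 hu₀W
  have hBnull : μκ s (Safe \ Reach) = 0 := by rw [hSR]; exact hg0 s
  -- combine
  have key : ∀ (X Y : Set (ℕ → S)), μκ s (X \ Y) = 0 → μκ s X = μκ s (X ∩ Y) := by
    intro X Y hnull
    refine le_antisymm ?_ (measure_mono Set.inter_subset_left)
    calc μκ s X ≤ μκ s ((X ∩ Y) ∪ (X \ Y)) := measure_mono (by
          intro ω hω
          by_cases h : ω ∈ Y
          · exact Or.inl ⟨hω, h⟩
          · exact Or.inr ⟨hω, h⟩)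
      _ ≤ μκ s (X ∩ Y) + μκ s (X \ Y) := measure_union_le _ _
      _ = μκ s (X ∩ Y) := by rw [hnull, add_zero]
  have h1 : μκ s Safe = μκ s (Safe ∩ Reach) := key Safe Reach hBnull
  have h2 : μκ s Reach = μκ s (Reach ∩ Safe) := key Reach Safe hAnull
  rw [h1, h2, Set.inter_comm]
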